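/- Let p > 2, q = p/(p-1), ε ∈ (0,1/2), δ = 2q(q-1)ε/85, and let Q be the Nazarov–Treil Bellman function. In Ω_b = {|ζ|^p < |η|^q}, for |φ| ≤ arctan(2√(p-1)/(p-2)) and ω₁, ω₂ ∈ ℝ²: ⟨(H₂(Q) + tan φ · I₂(Q))(ζ,η) ω₁, ω₂⟩ ≥ -8δ|ω₁||ω₂|, where H₂(Q) is the mixed ζ-η Hessian block and I₂(Q) = (1/2)[[∂²_{ζ₂η₁}Q - ∂²_{ζ₁η₂}Q, ∂²_{ζ₁η₁}Q + ∂²_{ζ₂η₂}Q],[-∂²_{ζ₁η₁}Q - ∂²_{ζ₂η₂}Q, ∂²_{ζ₂η₁}Q - ∂²_{ζ₁η₂}Q]]. -/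

import Mathlib

noncomputable section
open Real Matrix

def qexp (p : ℝ) : ℝ := p / (p - 1)

/-- The Nazarov–Treil Bellman function on `ℂ × ℂ ≅ ℝ² × ℝ²`. -/
def Q (p δ : ℝ) (ζ η : ℂ) : ℝ :=
  if ‖ζ‖ ^ p ≤ ‖η‖ ^ qexp p then
    ‖ζ‖ ^ p + ‖η‖ ^ qexp p +
      δ * (‖ζ‖ ^ (2 : ℝ) * ‖η‖ ^ (2 - qexp p))
  else
    ‖ζ‖ ^ p + ‖η‖ ^ qexp p +
      δ * ((2 / p) * ‖ζ‖ ^ p + (2 / qexp p - 1) * ‖η‖ ^ qexp p)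

/-- Coordinate directions in `ℂ ≅ ℝ²`. -/
def dir : Fin 2 → ℂ := ![1, Complex.I]

/-- Partial derivative of `Q` in the `i`-th coordinate of the `ζ` variable. -/
def dζ (p δ : ℝ) (i : Fin 2) (ζ η : ℂ) : ℝ :=
  deriv (fun t : ℝ => Q p δ (ζ + (t : ℂ) * dir i) η) 0

/-- Partial derivative of `Q` in the `i`-th coordinate of the `η` variable. -/
def dη (p δ : ℝ) (i : Fin 2) (ζ η : ℂ) : ℝ :=
  deriv (fun t : ℝ => Q p δ ζ (η + (t : ℂ) * dir i)) 0

/-- The `ζζ` block of the Hessian of `Q`: `(H₁)ᵢⱼ = ∂²_{ζᵢζⱼ} Q`. -/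
def H1 (p δ : ℝ) (ζ η : ℂ) : Matrix (Fin 2) (Fin 2) ℝ :=
  Matrix.of fun i j => deriv (fun s : ℝ => dζ p δ j (ζ + (s : ℂ) * dir i) η) 0

/-- The mixed `ζη` block of the Hessian of `Q`: `(H₂)ᵢⱼ = ∂²_{ζᵢηⱼ} Q`. -/
def H2 (p δ : ℝ) (ζ η : ℂ) : Matrix (Fin 2) (Fin 2) ℝ :=
  Matrix.of fun i j => deriv (fun s : ℝ => dη p δ j (ζ + (s : ℂ) * dir i) η) 0

/-- The `ηη` block of the Hessian of `Q`: `(H₃)ᵢⱼ = ∂²_{ηᵢηⱼ} Q`. -/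
def H3 (p δ : ℝ) (ζ η : ℂ) : Matrix (Fin 2) (Fin 2) ℝ :=
  Matrix.of fun i j => deriv (fun s : ℝ => dη p δ j ζ (η + (s : ℂ) * dir i)) 0

def I1 (p δ : ℝ) (ζ η : ℂ) : Matrix (Fin 2) (Fin 2) ℝ :=
  !![H1 p δ ζ η 0 1, (H1 p δ ζ η 1 1 - H1 p δ ζ η 0 0) / 2;
     (H1 p δ ζ η 1 1 - H1 p δ ζ η 0 0) / 2, -(H1 p δ ζ η 0 1)]

def I2 (p δ : ℝ) (ζ η : ℂ) : Matrix (Fin 2) (Fin 2) ℝ :=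
  (1 / 2 : ℝ) •
    !![H2 p δ ζ η 1 0 - H2 p δ ζ η 0 1, H2 p δ ζ η 0 0 + H2 p δ ζ η 1 1;
       -(H2 p δ ζ η 0 0) - H2 p δ ζ η 1 1, H2 p δ ζ η 1 0 - H2 p δ ζ η 0 1]

def I3 (p δ : ℝ) (ζ η : ℂ) : Matrix (Fin 2) (Fin 2) ℝ :=
  !![H3 p δ ζ η 0 1, (H3 p δ ζ η 1 1 - H3 p δ ζ η 0 0) / 2;
     (H3 p δ ζ η 1 1 - H3 p δ ζ η 0 0) / 2, -(H3 p δ ζ η 0 1)]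


section NTaux

lemma NT_hasDerivAt_normSq_line (z e : ℂ) :
    HasDerivAt (fun t : ℝ => Complex.normSq (z + (t:ℂ) * e))
      (2 * (z.re * e.re + z.im * e.im)) 0 := by
  have h : (fun t : ℝ => Complex.normSq (z + (t:ℂ) * e)) =
      fun t : ℝ => (z.re + t * e.re)^2 + (z.im + t * e.im)^2 := by
    funext t
    simp [Complex.normSq_apply, Complex.add_re, Complex.add_im, Complex.mul_re, Complex.mul_im,
      Complex.ofReal_re, Complex.ofReal_im]
    ring
  rw [h]
  have ha : HasDerivAt (fun t : ℝ => z.re + t * e.re) e.re 0 := by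
    simpa using ((hasDerivAt_id (0:ℝ)).mul_const e.re).const_add z.re
  have hb : HasDerivAt (fun t : ℝ => z.im + t * e.im) e.im 0 := by
    simpa using ((hasDerivAt_id (0:ℝ)).mul_const e.im).const_add z.im
  have := ((ha.pow 2).add (hb.pow 2) :
    HasDerivAt (fun t : ℝ => (z.re + t * e.re)^2 + (z.im + t * e.im)^2) _ 0)
  refine this.congr_deriv ?_
  simp
  ring

lemma NT_abs_rpow_eq (w : ℂ) (α : ℝ) :
    ‖w‖ ^ α = Complex.normSq w ^ (α / 2) := by
  rw [Complex.norm_def, Real.sqrt_eq_rpow, ← Real.rpow_mul (Complex.normSq_nonneg w)]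
  ring_nf

lemma NT_hasDerivAt_abs_rpow (z e : ℂ) (hz : z ≠ 0) (α : ℝ) :
    HasDerivAt (fun t : ℝ => ‖z + (t:ℂ) * e‖ ^ α)
      (α * ‖z‖ ^ (α - 2) * (z.re * e.re + z.im * e.im)) 0 := by
  have h : (fun t : ℝ => ‖z + (t:ℂ) * e‖ ^ α) =
      fun t : ℝ => Complex.normSq (z + (t:ℂ) * e) ^ (α / 2) := by
    funext t; exact NT_abs_rpow_eq _ _
  rw [h]
  have hne : Complex.normSq (z + (0:ℝ) * e) ≠ 0 := by
    simpa using hz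
  have := (NT_hasDerivAt_normSq_line z e).rpow_const (p := α / 2) (Or.inl hne)
  convert this using 1
  rw [NT_abs_rpow_eq]
  push_cast
  simp
  ring_nf

lemma NT_eta_ne (p : ℝ) (hp : 2 < p) (ζ η : ℂ)
    (hb : ‖ζ‖ ^ p < ‖η‖ ^ qexp p) : η ≠ 0 := by
  intro h
  rw [h] at hb
  have hq0 : qexp p ≠ 0 := by
    have : p - 1 > 0 := by linarith
    simp only [qexp]
    positivity
  rw [norm_zero, Real.zero_rpow hq0] at hb
  exact absurd hb (not_lt.mpr (Real.rpow_nonneg (norm_nonneg ζ) p))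

lemma NT_deta_formula (p δ : ℝ) (hp : 2 < p) (j : Fin 2) (ζ η : ℂ)
    (hb : ‖ζ‖ ^ p < ‖η‖ ^ qexp p) :
    dη p δ j ζ η =
      (qexp p * ‖η‖ ^ (qexp p - 2)
        + δ * ‖ζ‖ ^ (2:ℝ) * ((2 - qexp p) * ‖η‖ ^ (-qexp p)))
      * (η.re * (dir j).re + η.im * (dir j).im) := by
  have hη : η ≠ 0 := NT_eta_ne p hp ζ η hb
  set q := qexp p with hqdef
  set e := dir j with he
  set c := η.re * e.re + η.im * e.im with hc
  have h1 : HasDerivAt (fun t : ℝ => ‖η + (t:ℂ) * e‖ ^ q)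
      (q * ‖η‖ ^ (q - 2) * c) 0 := NT_hasDerivAt_abs_rpow η e hη q
  have h2 : HasDerivAt (fun t : ℝ => ‖η + (t:ℂ) * e‖ ^ (2 - q))
      ((2 - q) * ‖η‖ ^ (-q) * c) 0 := by
    have := NT_hasDerivAt_abs_rpow η e hη (2 - q)
    convert this using 2
    ring_nf
  have hF : HasDerivAt (fun t : ℝ =>
      ‖ζ‖ ^ p + ‖η + (t:ℂ) * e‖ ^ q +
        δ * (‖ζ‖ ^ (2:ℝ) * ‖η + (t:ℂ) * e‖ ^ (2 - q)))
      (q * ‖η‖ ^ (q - 2) * c +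
        δ * (‖ζ‖ ^ (2:ℝ) * ((2 - q) * ‖η‖ ^ (-q) * c))) 0 := by
    exact (h1.const_add _).add ((h2.const_mul _).const_mul δ)
  have hcont : ContinuousAt (fun t : ℝ => ‖η + (t:ℂ) * e‖ ^ q) 0 :=
    h1.continuousAt
  have hev : ∀ᶠ t : ℝ in nhds (0:ℝ),
      ‖ζ‖ ^ p < ‖η + (t:ℂ) * e‖ ^ q := by
    have h0 : (fun _ : ℝ => ‖ζ‖ ^ p) 0 < (fun t : ℝ => ‖η + (t:ℂ) * e‖ ^ q) 0 := by
      simpa using hb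
    exact ContinuousAt.eventually_lt (f := fun _ : ℝ => ‖ζ‖ ^ p)
      (g := fun t : ℝ => ‖η + (t:ℂ) * e‖ ^ q) continuousAt_const hcont h0
  have heq : (fun t : ℝ => Q p δ ζ (η + (t:ℂ) * e)) =ᶠ[nhds (0:ℝ)]
      (fun t : ℝ => ‖ζ‖ ^ p + ‖η + (t:ℂ) * e‖ ^ q +
        δ * (‖ζ‖ ^ (2:ℝ) * ‖η + (t:ℂ) * e‖ ^ (2 - q))) := by
    filter_upwards [hev] with t ht
    simp only [Q, hqdef]
    rw [if_pos ht.le]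
  rw [dη, heq.deriv_eq, hF.deriv]
  ring

lemma NT_abs_rpow_two (w : ℂ) : ‖w‖ ^ (2:ℝ) = Complex.normSq w := by
  rw [NT_abs_rpow_eq]
  norm_num

lemma NT_H2_formula (p δ : ℝ) (hp : 2 < p) (i j : Fin 2) (ζ η : ℂ)
    (hb : ‖ζ‖ ^ p < ‖η‖ ^ qexp p) :
    H2 p δ ζ η i j =
      2 * δ * (2 - qexp p) * ‖η‖ ^ (-qexp p)
        * (ζ.re * (dir i).re + ζ.im * (dir i).im)
        * (η.re * (dir j).re + η.im * (dir j).im) := by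
  set q := qexp p with hqdef
  set e := dir i with he
  set f := dir j with hf
  set cj := η.re * f.re + η.im * f.im with hcj
  have hcont : ContinuousAt (fun s : ℝ => ‖ζ + (s:ℂ) * e‖ ^ p) 0 := by
    have h : (fun s : ℝ => ‖ζ + (s:ℂ) * e‖ ^ p) =
        fun s : ℝ => Complex.normSq (ζ + (s:ℂ) * e) ^ (p / 2) := by
      funext s; exact NT_abs_rpow_eq _ _
    rw [h]
    exact (NT_hasDerivAt_normSq_line ζ e).continuousAt.rpow_const (Or.inr (by linarith))
  have hev : ∀ᶠ s : ℝ in nhds (0:ℝ),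
      ‖ζ + (s:ℂ) * e‖ ^ p < ‖η‖ ^ q := by
    have h0 : (fun s : ℝ => ‖ζ + (s:ℂ) * e‖ ^ p) 0 <
        (fun _ : ℝ => ‖η‖ ^ q) 0 := by simpa using hb
    exact ContinuousAt.eventually_lt (g := fun _ : ℝ => ‖η‖ ^ q)
      hcont continuousAt_const h0
  have heq : (fun s : ℝ => dη p δ j (ζ + (s:ℂ) * e) η) =ᶠ[nhds (0:ℝ)]
      (fun s : ℝ => (q * ‖η‖ ^ (q - 2)
        + δ * Complex.normSq (ζ + (s:ℂ) * e) * ((2 - q) * ‖η‖ ^ (-q))) * cj) := by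
    filter_upwards [hev] with s hs
    rw [NT_deta_formula p δ hp j _ η hs, NT_abs_rpow_two]
  have hD : HasDerivAt (fun s : ℝ => (q * ‖η‖ ^ (q - 2)
        + δ * Complex.normSq (ζ + (s:ℂ) * e) * ((2 - q) * ‖η‖ ^ (-q))) * cj)
      (δ * (2 * (ζ.re * e.re + ζ.im * e.im)) * ((2 - q) * ‖η‖ ^ (-q)) * cj) 0 := by
    exact ((((NT_hasDerivAt_normSq_line ζ e).const_mul δ).mul_const
      ((2 - q) * ‖η‖ ^ (-q))).const_add _).mul_const cj
  show deriv (fun s : ℝ => dη p δ j (ζ + (s:ℂ) * e) η) 0 = _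
  rw [heq.deriv_eq, hD.deriv]
  ring

lemma NT_cs2 (a b x y : ℝ) : |a*x + b*y| ≤ Real.sqrt (a^2+b^2) * Real.sqrt (x^2+y^2) := by
  rw [← Real.sqrt_mul (by positivity), ← Real.sqrt_sq_eq_abs]
  apply Real.sqrt_le_sqrt
  nlinarith [sq_nonneg (a*y - b*x)]

lemma NT_tan_abs_le (φ T : ℝ) (hT : 0 ≤ T) (hφ : |φ| ≤ Real.arctan T) : |Real.tan φ| ≤ T := by
  have h1 : Real.arctan T < π/2 := Real.arctan_lt_pi_div_two T
  have h2 : -(π/2) < -Real.arctan T := by linarith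
  obtain ⟨ha, hb⟩ := abs_le.mp hφ
  have hmem : φ ∈ Set.Ioo (-(π/2)) (π/2) := ⟨by linarith, by linarith⟩
  have hamem : Real.arctan T ∈ Set.Ioo (-(π/2)) (π/2) :=
    ⟨by linarith [Real.neg_pi_div_two_lt_arctan T], h1⟩
  have hT2 : 0 ≤ Real.arctan T := by
    rw [← Real.arctan_zero]; exact Real.arctan_strictMono.monotone hT
  have hnamem : -Real.arctan T ∈ Set.Ioo (-(π/2)) (π/2) :=
    ⟨h2, by linarith [Real.pi_pos]⟩
  have mono := Real.strictMonoOn_tan.monotoneOn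
  have hu : Real.tan φ ≤ T := by
    have := mono hmem hamem hb
    rwa [Real.tan_arctan] at this
  have hl : -T ≤ Real.tan φ := by
    have := mono hnamem hmem ha
    rwa [Real.tan_neg, Real.tan_arctan] at this
  exact abs_le.mpr ⟨hl, hu⟩

lemma NT_coef_bound (p : ℝ) (hp : 2 < p) :
    (2 + 2 * Real.sqrt (p-1) / (p-2)) * (2 - p/(p-1)) ≤ 4 := by
  set s := Real.sqrt (p-1) with hs
  have hs2 : s^2 = p - 1 := Real.sq_sqrt (by linarith)
  have hs0 : 0 ≤ s := Real.sqrt_nonneg _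
  have hs1 : 1 < s := by nlinarith
  have hpe : p = s^2 + 1 := by linarith
  rw [hpe]
  have hd : s^2 - 1 > 0 := by nlinarith
  have hd2 : (0:ℝ) < s^2 := by positivity
  rw [show (s^2+1-2) = s^2-1 by ring, show (s^2+1-1) = s^2 by ring]
  have e1 : 2 + 2*s/(s^2-1) = (2*(s^2-1)+2*s)/(s^2-1) := by field_simp
  have e2 : 2 - (s^2+1)/s^2 = (s^2-1)/s^2 := by field_simp; ring
  rw [e1, e2, div_mul_div_comm, div_le_iff₀ (by positivity)]
  nlinarith [mul_nonneg hd.le (show (0:ℝ) ≤ 2*s^2 - 2*s + 2 by nlinarith [sq_nonneg (s-1)])]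

lemma NT_main_ineq (K t zr zi er ei u0 u1 v0 v1 B T : ℝ)
    (hK0 : 0 ≤ K) (hT0 : 0 ≤ T)
    (hKB : (2 + T) * (K * (Real.sqrt (zr^2+zi^2) * Real.sqrt (er^2+ei^2))) ≤ B)
    (ht : |t| ≤ T) :
    -(B * (Real.sqrt (u0^2+u1^2) * Real.sqrt (v0^2+v1^2))) ≤
      2*K*((zr*v0+zi*v1)*(er*u0+ei*u1))
        + t * (K*((zi*er-zr*ei)*(u0*v0+u1*v1) + (zr*er+zi*ei)*(u1*v0-u0*v1))) := by
  have hS1 : 0 ≤ Real.sqrt (u0^2+u1^2) := Real.sqrt_nonneg _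
  have hS2 : 0 ≤ Real.sqrt (v0^2+v1^2) := Real.sqrt_nonneg _
  have hZ : 0 ≤ Real.sqrt (zr^2+zi^2) := Real.sqrt_nonneg _
  have hEa : 0 ≤ Real.sqrt (er^2+ei^2) := Real.sqrt_nonneg _
  have hP : |(zr*v0+zi*v1)*(er*u0+ei*u1)| ≤
      (Real.sqrt (zr^2+zi^2) * Real.sqrt (er^2+ei^2)) *
        (Real.sqrt (u0^2+u1^2) * Real.sqrt (v0^2+v1^2)) := by
    rw [abs_mul]
    calc |zr*v0+zi*v1| * |er*u0+ei*u1|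
        ≤ (Real.sqrt (zr^2+zi^2) * Real.sqrt (v0^2+v1^2)) *
          (Real.sqrt (er^2+ei^2) * Real.sqrt (u0^2+u1^2)) :=
          mul_le_mul (NT_cs2 _ _ _ _) (NT_cs2 _ _ _ _) (abs_nonneg _) (by positivity)
      _ = _ := by ring
  have hR : |(zi*er-zr*ei)*(u0*v0+u1*v1) + (zr*er+zi*ei)*(u1*v0-u0*v1)| ≤
      (Real.sqrt (zr^2+zi^2) * Real.sqrt (er^2+ei^2)) *
        (Real.sqrt (u0^2+u1^2) * Real.sqrt (v0^2+v1^2)) := by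
    have h := NT_cs2 (zi*er-zr*ei) (zr*er+zi*ei) (u0*v0+u1*v1) (u1*v0-u0*v1)
    have e1 : Real.sqrt ((zi*er-zr*ei)^2+(zr*er+zi*ei)^2)
        = Real.sqrt (zr^2+zi^2) * Real.sqrt (er^2+ei^2) := by
      rw [show (zi*er-zr*ei)^2+(zr*er+zi*ei)^2 = (zr^2+zi^2)*(er^2+ei^2) from by ring,
        Real.sqrt_mul (by positivity)]
    have e2 : Real.sqrt ((u0*v0+u1*v1)^2+(u1*v0-u0*v1)^2)
        = Real.sqrt (u0^2+u1^2) * Real.sqrt (v0^2+v1^2) := by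
      rw [show (u0*v0+u1*v1)^2+(u1*v0-u0*v1)^2 = (u0^2+u1^2)*(v0^2+v1^2) from by ring,
        Real.sqrt_mul (by positivity)]
    rw [e1, e2] at h
    exact h
  obtain ⟨hP1, hP2⟩ := abs_le.mp hP
  obtain ⟨hR1, hR2⟩ := abs_le.mp hR
  obtain ⟨ht1, ht2⟩ := abs_le.mp ht
  have habs : |t * (K*((zi*er-zr*ei)*(u0*v0+u1*v1) + (zr*er+zi*ei)*(u1*v0-u0*v1)))| ≤
      T * (K * ((Real.sqrt (zr^2+zi^2) * Real.sqrt (er^2+ei^2)) *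
        (Real.sqrt (u0^2+u1^2) * Real.sqrt (v0^2+v1^2)))) := by
    rw [abs_mul, abs_mul, abs_of_nonneg hK0]
    exact mul_le_mul ht (mul_le_mul_of_nonneg_left hR hK0) (by positivity) hT0
  have h2 := neg_abs_le (t * (K*((zi*er-zr*ei)*(u0*v0+u1*v1) + (zr*er+zi*ei)*(u1*v0-u0*v1))))
  nlinarith [mul_le_mul_of_nonneg_right hKB (mul_nonneg hS1 hS2),
    mul_le_mul_of_nonneg_left hP1 (show (0:ℝ) ≤ 2*K by linarith)]

end NTaux

theorem stmt13 (p ε δ φ : ℝ) (hp : 2 < p) (hε : ε ∈ Set.Ioo (0 : ℝ) (1 / 2))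
    (hδ : δ = 2 * qexp p * (qexp p - 1) * ε / 85)
    (hφ : |φ| ≤ Real.arctan (2 * Real.sqrt (p - 1) / (p - 2)))
    (ζ η : ℂ) (hb : ‖ζ‖ ^ p < ‖η‖ ^ qexp p) (ω₁ ω₂ : Fin 2 → ℝ) :
    -(8 * δ * Real.sqrt (ω₁ ⬝ᵥ ω₁) * Real.sqrt (ω₂ ⬝ᵥ ω₂)) ≤
      ((H2 p δ ζ η + Real.tan φ • I2 p δ ζ η).mulVec ω₁) ⬝ᵥ ω₂ := by
  have hp1 : (0:ℝ) < p - 1 := by linarith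
  have hq1 : 1 < qexp p := by
    rw [qexp, lt_div_iff₀ hp1]; linarith
  have hq2 : qexp p < 2 := by
    rw [qexp, div_lt_iff₀ hp1]; linarith
  have hδ0 : 0 ≤ δ := by
    rw [hδ]
    apply div_nonneg _ (by norm_num)
    nlinarith [mul_pos (mul_pos (show (0:ℝ) < 2*qexp p by linarith) (show (0:ℝ) < qexp p - 1 by linarith)) hε.1]
  have hη : η ≠ 0 := NT_eta_ne p hp ζ η hb
  have hEapos : 0 < ‖η‖ := norm_pos_iff.mpr hη
  set T : ℝ := 2 * Real.sqrt (p-1) / (p-2) with hT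
  have hT0 : 0 ≤ T := div_nonneg (by positivity) (by linarith)
  have htan : |Real.tan φ| ≤ T := NT_tan_abs_le φ T hT0 hφ
  set K : ℝ := δ * (2 - qexp p) * ‖η‖ ^ (-qexp p) with hKdef
  have hK0 : 0 ≤ K := by
    apply mul_nonneg (mul_nonneg hδ0 (by linarith))
    exact Real.rpow_nonneg hEapos.le _
  -- |ζ| ≤ |η|^(q-1)
  have hZb : ‖ζ‖ ≤ ‖η‖ ^ (qexp p - 1) := by
    have h1 : (‖ζ‖ ^ p) ^ (1/p) ≤ (‖η‖ ^ qexp p) ^ (1/p) :=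
      Real.rpow_le_rpow (Real.rpow_nonneg (norm_nonneg ζ) p) hb.le
        (by positivity)
    rw [← Real.rpow_mul (norm_nonneg ζ), ← Real.rpow_mul (norm_nonneg η),
      mul_one_div_cancel (show p ≠ 0 by linarith), Real.rpow_one] at h1
    have he : qexp p * (1/p) = qexp p - 1 := by
      rw [qexp]; field_simp; ring
    rwa [he] at h1
  have hprod : ‖η‖ ^ (1 - qexp p) * ‖ζ‖ ≤ 1 := by
    have h1 : ‖η‖ ^ (1 - qexp p) * ‖ζ‖ ≤
        ‖η‖ ^ (1 - qexp p) * ‖η‖ ^ (qexp p - 1) :=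
      mul_le_mul_of_nonneg_left hZb (Real.rpow_nonneg hEapos.le _)
    rwa [← Real.rpow_add hEapos, show (1 - qexp p) + (qexp p - 1) = 0 by ring,
      Real.rpow_zero] at h1
  have hEE : ‖η‖ ^ (-qexp p) * ‖η‖ = ‖η‖ ^ (1 - qexp p) := by
    nth_rewrite 2 [← Real.rpow_one (‖η‖)]
    rw [← Real.rpow_add hEapos]
    ring_nf
  have hchain : K * (‖ζ‖ * ‖η‖) ≤ δ * (2 - qexp p) := by
    have h1 : K * (‖ζ‖ * ‖η‖) =
        (δ * (2 - qexp p)) * ((‖η‖ ^ (-qexp p) * ‖η‖) * ‖ζ‖) := by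
      rw [hKdef]; ring
    rw [h1, hEE]
    calc (δ * (2 - qexp p)) * (‖η‖ ^ (1 - qexp p) * ‖ζ‖)
        ≤ (δ * (2 - qexp p)) * 1 :=
          mul_le_mul_of_nonneg_left hprod (mul_nonneg hδ0 (by linarith))
      _ = δ * (2 - qexp p) := mul_one _
  have habsζ : Real.sqrt (ζ.re^2 + ζ.im^2) = ‖ζ‖ := by
    rw [Complex.norm_def, Complex.normSq_apply]; congr 1; ring
  have habsη : Real.sqrt (η.re^2 + η.im^2) = ‖η‖ := by
    rw [Complex.norm_def, Complex.normSq_apply]; congr 1; ring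
  have hcoef : (2 + T) * (2 - qexp p) ≤ 4 := by
    have := NT_coef_bound p hp
    rw [hT, qexp]
    linarith [this]
  have hKB : (2 + T) * (K * (Real.sqrt (ζ.re^2 + ζ.im^2) * Real.sqrt (η.re^2 + η.im^2))) ≤
      8 * δ := by
    rw [habsζ, habsη]
    calc (2 + T) * (K * (‖ζ‖ * ‖η‖))
        ≤ (2 + T) * (δ * (2 - qexp p)) :=
          mul_le_mul_of_nonneg_left hchain (by linarith)
      _ = ((2 + T) * (2 - qexp p)) * δ := by ring
      _ ≤ 4 * δ := mul_le_mul_of_nonneg_right hcoef hδ0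
      _ ≤ 8 * δ := by linarith
  -- explicit entries of H2
  have e00 : H2 p δ ζ η 0 0 = 2*K*(ζ.re*η.re) := by
    rw [NT_H2_formula p δ hp 0 0 ζ η hb, hKdef]; simp [dir]; ring
  have e01 : H2 p δ ζ η 0 1 = 2*K*(ζ.re*η.im) := by
    rw [NT_H2_formula p δ hp 0 1 ζ η hb, hKdef]; simp [dir]; ring
  have e10 : H2 p δ ζ η 1 0 = 2*K*(ζ.im*η.re) := by
    rw [NT_H2_formula p δ hp 1 0 ζ η hb, hKdef]; simp [dir]; ring
  have e11 : H2 p δ ζ η 1 1 = 2*K*(ζ.im*η.im) := by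
    rw [NT_H2_formula p δ hp 1 1 ζ η hb, hKdef]; simp [dir]; ring
  have hform : ((H2 p δ ζ η + Real.tan φ • I2 p δ ζ η).mulVec ω₁) ⬝ᵥ ω₂ =
      2*K*((ζ.re*(ω₂ 0)+ζ.im*(ω₂ 1))*(η.re*(ω₁ 0)+η.im*(ω₁ 1)))
        + Real.tan φ * (K*((ζ.im*η.re-ζ.re*η.im)*((ω₁ 0)*(ω₂ 0)+(ω₁ 1)*(ω₂ 1))
            + (ζ.re*η.re+ζ.im*η.im)*((ω₁ 1)*(ω₂ 0)-(ω₁ 0)*(ω₂ 1)))) := by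
    simp [Matrix.mulVec, dotProduct, Fin.sum_univ_two, Matrix.add_apply,
      Matrix.smul_apply, I2, e00, e01, e10, e11, smul_eq_mul]
    ring
  have hd1 : ω₁ ⬝ᵥ ω₁ = (ω₁ 0)^2 + (ω₁ 1)^2 := by
    simp [dotProduct, Fin.sum_univ_two]; ring
  have hd2 : ω₂ ⬝ᵥ ω₂ = (ω₂ 0)^2 + (ω₂ 1)^2 := by
    simp [dotProduct, Fin.sum_univ_two]; ring
  rw [hform, hd1, hd2]
  have := NT_main_ineq K (Real.tan φ) ζ.re ζ.im η.re η.im (ω₁ 0) (ω₁ 1) (ω₂ 0) (ω₂ 1)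
    (8*δ) T hK0 hT0 hKB htan
  linarith [this]
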